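/- (Belief-ordering invariant, negatively correlated case.) In the setting of the order-reversing round-robin dynamics with 0 ≤ p11 < p01 ≤ 1 — beliefs Ω(t) ∈ [0,1]^N, enumeration σ : Z/NZ → channels sorting the initial beliefs in descending order, positions k(1) = 0, k(t+1) = k(t) if s(t) = 0, and if s(t) = 1 then k(t+1) = k(t)+1 (mod N) when t+1 is odd and k(t+1) = k(t)−1 (mod N) when t+1 is even, actions â(t) = σ(k(t)), and belief updates ω_{â(t)}(t+1) = p11 if s(t) = 1, = p01 if s(t) = 0, and ω_i(t+1) = τ(ω_i(t)) for i ≠ â(t) — the beliefs remain sorted in descending order along the current circular order: for every odd t ≥ 1 and every 0 ≤ m ≤ N−2, ω_{σ(k(t)+m mod N)}(t) ≥ ω_{σ(k(t)+m+1 mod N)}(t), and for every even t ≥ 2 and every 0 ≤ m ≤ N−2, ω_{σ(k(t)−m mod N)}(t) ≥ ω_{σ(k(t)−m−1 mod N)}(t). -/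
import Mathlib


/-- Belief-ordering invariant for the order-reversing round-robin dynamics with negatively
correlated channels (`p11 < p01`): at every odd time the beliefs are sorted in descending
order along the initial circular order starting from the current position, and at every even
time along the reversed circular order. -/
theorem belief_order_invariant_negatively_correlated
    (N : ℕ) (hN : 1 ≤ N) (p01 p11 : ℝ)
    (h0 : 0 ≤ p11) (h11 : p11 < p01) (h1 : p01 ≤ 1)
    (τ : ℝ → ℝ) (hτ : ∀ x, τ x = x * p11 + (1 - x) * p01)
    (ω : ℕ → Fin N → ℝ) (σ : ZMod N ≃ Fin N)
    (hbelief : ∀ i : Fin N, ω 1 i ∈ Set.Icc (0 : ℝ) 1)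
    (hsorted : ∀ m : ℕ, m + 1 < N →
      ω 1 (σ ((m + 1 : ℕ) : ZMod N)) ≤ ω 1 (σ ((m : ℕ) : ZMod N)))
    (s : ℕ → Bool) (k : ℕ → ZMod N)
    (hk1 : k 1 = 0)
    (hk : ∀ t, 1 ≤ t → k (t + 1) =
      if s t then (if (t + 1) % 2 = 1 then k t + 1 else k t - 1) else k t)
    (hupObs : ∀ t, 1 ≤ t → ω (t + 1) (σ (k t)) = if s t then p11 else p01)
    (hupUnobs : ∀ t, 1 ≤ t → ∀ i : Fin N, i ≠ σ (k t) → ω (t + 1) i = τ (ω t i)) :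
    (∀ t, 1 ≤ t → t % 2 = 1 → ∀ m : ℕ, m + 2 ≤ N →
      ω t (σ (k t + ((m + 1 : ℕ) : ZMod N))) ≤ ω t (σ (k t + ((m : ℕ) : ZMod N)))) ∧
    (∀ t, 2 ≤ t → t % 2 = 0 → ∀ m : ℕ, m + 2 ≤ N →
      ω t (σ (k t - ((m + 1 : ℕ) : ZMod N))) ≤ ω t (σ (k t - ((m : ℕ) : ZMod N)))) := by
  have hNZ : NeZero N := ⟨by omega⟩
  -- basic facts about τ
  have hτmono : ∀ x y : ℝ, x ≤ y → τ y ≤ τ x := by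
    intro x y h; rw [hτ, hτ]; nlinarith
  have hτlb : ∀ x : ℝ, 0 ≤ x → x ≤ 1 → p11 ≤ τ x := by
    intro x hx hx1; rw [hτ]; nlinarith
  have hτub : ∀ x : ℝ, 0 ≤ x → x ≤ 1 → τ x ≤ p01 := by
    intro x hx hx1; rw [hτ]; nlinarith
  -- cast facts in ZMod N
  have hcast0 : ∀ j : ℕ, 1 ≤ j → j < N → ((j : ℕ) : ZMod N) ≠ 0 := by
    intro j h1j h2j h
    have hd : N ∣ j := (ZMod.natCast_eq_zero_iff j N).mp h
    have := Nat.le_of_dvd (by omega) hd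
    omega
  have hsub2 : ∀ (c : ZMod N) (a b : ℕ), a + b = N →
      c - ((a : ℕ) : ZMod N) = c + ((b : ℕ) : ZMod N) := by
    intro c a b h
    have h1 : ((a + b : ℕ) : ZMod N) = 0 := by rw [h]; exact ZMod.natCast_self N
    have h2 : ((a : ℕ) : ZMod N) + ((b : ℕ) : ZMod N) = 0 := by
      rw [← Nat.cast_add]; exact h1
    linear_combination -h2
  -- the nonobserved channels, relative to position k t
  have hneP : ∀ t : ℕ, ∀ j : ℕ, 1 ≤ j → j < N →
      σ (k t + ((j : ℕ) : ZMod N)) ≠ σ (k t) := by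
    intro t j h1 h2 h
    have h3 := σ.injective h
    have : ((j : ℕ) : ZMod N) = 0 := by linear_combination h3
    exact hcast0 j h1 h2 this
  have hneM : ∀ t : ℕ, ∀ j : ℕ, 1 ≤ j → j < N →
      σ (k t - ((j : ℕ) : ZMod N)) ≠ σ (k t) := by
    intro t j h1 h2 h
    have h3 := σ.injective h
    have : ((j : ℕ) : ZMod N) = 0 := by linear_combination -h3
    exact hcast0 j h1 h2 this
  -- the invariant
  have main : ∀ t, 1 ≤ t →
      (∀ i, 0 ≤ ω t i ∧ ω t i ≤ 1) ∧
      (t % 2 = 1 → ∀ m : ℕ, m + 2 ≤ N →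
        ω t (σ (k t + ((m + 1 : ℕ) : ZMod N))) ≤ ω t (σ (k t + ((m : ℕ) : ZMod N)))) ∧
      (t % 2 = 0 → ∀ m : ℕ, m + 2 ≤ N →
        ω t (σ (k t - ((m + 1 : ℕ) : ZMod N))) ≤ ω t (σ (k t - ((m : ℕ) : ZMod N)))) := by
    intro t ht
    induction t, ht using Nat.le_induction with
    | base =>
      refine ⟨fun i => ⟨(hbelief i).1, (hbelief i).2⟩, ?_, ?_⟩
      · intro _ m hm
        rw [hk1, zero_add, zero_add]
        exact hsorted m (by omega)
      · intro h; omega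
    | succ t ht ih =>
      obtain ⟨hbnd, hodd, heven⟩ := ih
      have hτbnd : ∀ i, p11 ≤ τ (ω t i) ∧ τ (ω t i) ≤ p01 := fun i =>
        ⟨hτlb _ (hbnd i).1 (hbnd i).2, hτub _ (hbnd i).1 (hbnd i).2⟩
      have hobs := hupObs t ht
      have hun := hupUnobs t ht
      -- bounds at t+1
      have hbnd' : ∀ i, 0 ≤ ω (t + 1) i ∧ ω (t + 1) i ≤ 1 := by
        intro i
        by_cases hi : i = σ (k t)
        · rw [hi, hobs]
          cases s t <;> simp <;> constructor <;> linarith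
        · rw [hun i hi]
          constructor
          · linarith [(hτbnd i).1]
          · linarith [(hτbnd i).2]
      refine ⟨hbnd', ?_, ?_⟩
      · -- t+1 odd, so t even : plus-chain at t+1
        intro hpar m hm
        have htpar : t % 2 = 0 := by omega
        have hNe : ((t : ℕ) + 1) % 2 = 1 := hpar
        cases hs : s t with
        | true =>
          -- k (t+1) = k t + 1
          have hk' : k (t + 1) = k t + 1 := by rw [hk t ht, hs]; simp [hNe]
          rw [hk']
          by_cases hmN : m + 2 = N
          · -- boundary : left index is k t itself
            have eL : k t + 1 + ((m + 1 : ℕ) : ZMod N) = k t := by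
              have hNC : ((m + 2 : ℕ) : ZMod N) = 0 := by
                rw [hmN]; exact ZMod.natCast_self N
              push_cast at hNC ⊢
              linear_combination hNC
            have eR : k t + 1 + ((m : ℕ) : ZMod N) = k t + ((m + 1 : ℕ) : ZMod N) := by
              push_cast; ring
            rw [eL, eR, hobs, hs, if_pos rfl,
              hun _ (hneP t (m + 1) (by omega) (by omega))]
            exact (hτbnd _).1
          · -- interior
            have eL : k t + 1 + ((m + 1 : ℕ) : ZMod N) = k t + ((m + 2 : ℕ) : ZMod N) := by
              push_cast; ring
            have eR : k t + 1 + ((m : ℕ) : ZMod N) = k t + ((m + 1 : ℕ) : ZMod N) := by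
              push_cast; ring
            rw [eL, eR, hun _ (hneP t (m + 2) (by omega) (by omega)),
              hun _ (hneP t (m + 1) (by omega) (by omega))]
            apply hτmono
            -- convert to minus-chain of old time
            have eL' : k t + ((m + 2 : ℕ) : ZMod N) = k t - ((N - m - 2 : ℕ) : ZMod N) :=
              (hsub2 (k t) (N - m - 2) (m + 2) (by omega)).symm
            have eR' : k t + ((m + 1 : ℕ) : ZMod N) = k t - ((N - m - 1 : ℕ) : ZMod N) :=
              (hsub2 (k t) (N - m - 1) (m + 1) (by omega)).symm
            rw [eL', eR']
            have := heven htpar (N - m - 2) (by omega)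
            have e3 : (N - m - 2) + 1 = N - m - 1 := by omega
            rw [e3] at this
            exact this
        | false =>
          have hk' : k (t + 1) = k t := by rw [hk t ht, hs]; simp
          rw [hk']
          by_cases hm0 : m = 0
          · subst hm0
            have eR : k t + ((0 : ℕ) : ZMod N) = k t := by push_cast; ring
            rw [eR, hobs, hs, if_neg (by simp),
              hun _ (hneP t (0 + 1) (by omega) (by omega))]
            exact (hτbnd _).2
          · rw [hun _ (hneP t (m + 1) (by omega) (by omega)),
              hun _ (hneP t m (by omega) (by omega))]
            apply hτmono
            have eL' : k t + ((m + 1 : ℕ) : ZMod N) = k t - ((N - m - 1 : ℕ) : ZMod N) :=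
              (hsub2 (k t) (N - m - 1) (m + 1) (by omega)).symm
            have eR' : k t + ((m : ℕ) : ZMod N) = k t - ((N - m : ℕ) : ZMod N) :=
              (hsub2 (k t) (N - m) m (by omega)).symm
            rw [eL', eR']
            have := heven htpar (N - m - 1) (by omega)
            have e3 : (N - m - 1) + 1 = N - m := by omega
            rw [e3] at this
            exact this
      · -- t+1 even, so t odd : minus-chain at t+1
        intro hpar m hm
        have htpar : t % 2 = 1 := by omega
        have hNe : ((t : ℕ) + 1) % 2 ≠ 1 := by omega
        cases hs : s t with
        | true =>
          have hk' : k (t + 1) = k t - 1 := by rw [hk t ht, hs]; simp [if_neg hNe]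
          rw [hk']
          by_cases hmN : m + 2 = N
          · have eL : k t - 1 - ((m + 1 : ℕ) : ZMod N) = k t := by
              have hNC : ((m + 2 : ℕ) : ZMod N) = 0 := by
                rw [hmN]; exact ZMod.natCast_self N
              push_cast at hNC ⊢
              linear_combination (-1 : ZMod N) * hNC
            have eR : k t - 1 - ((m : ℕ) : ZMod N) = k t - ((m + 1 : ℕ) : ZMod N) := by
              push_cast; ring
            rw [eL, eR, hobs, hs, if_pos rfl,
              hun _ (hneM t (m + 1) (by omega) (by omega))]
            exact (hτbnd _).1
          · have eL : k t - 1 - ((m + 1 : ℕ) : ZMod N) = k t - ((m + 2 : ℕ) : ZMod N) := by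
              push_cast; ring
            have eR : k t - 1 - ((m : ℕ) : ZMod N) = k t - ((m + 1 : ℕ) : ZMod N) := by
              push_cast; ring
            rw [eL, eR, hun _ (hneM t (m + 2) (by omega) (by omega)),
              hun _ (hneM t (m + 1) (by omega) (by omega))]
            apply hτmono
            have eL' : k t - ((m + 2 : ℕ) : ZMod N) = k t + ((N - m - 2 : ℕ) : ZMod N) :=
              hsub2 (k t) (m + 2) (N - m - 2) (by omega)
            have eR' : k t - ((m + 1 : ℕ) : ZMod N) = k t + ((N - m - 1 : ℕ) : ZMod N) :=
              hsub2 (k t) (m + 1) (N - m - 1) (by omega)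
            rw [eL', eR']
            have := hodd htpar (N - m - 2) (by omega)
            have e3 : (N - m - 2) + 1 = N - m - 1 := by omega
            rw [e3] at this
            exact this
        | false =>
          have hk' : k (t + 1) = k t := by rw [hk t ht, hs]; simp
          rw [hk']
          by_cases hm0 : m = 0
          · subst hm0
            have eR : k t - ((0 : ℕ) : ZMod N) = k t := by push_cast; ring
            rw [eR, hobs, hs, if_neg (by simp),
              hun _ (hneM t (0 + 1) (by omega) (by omega))]
            exact (hτbnd _).2
          · rw [hun _ (hneM t (m + 1) (by omega) (by omega)),
              hun _ (hneM t m (by omega) (by omega))]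
            apply hτmono
            have eL' : k t - ((m + 1 : ℕ) : ZMod N) = k t + ((N - m - 1 : ℕ) : ZMod N) :=
              hsub2 (k t) (m + 1) (N - m - 1) (by omega)
            have eR' : k t - ((m : ℕ) : ZMod N) = k t + ((N - m : ℕ) : ZMod N) :=
              hsub2 (k t) m (N - m) (by omega)
            rw [eL', eR']
            have := hodd htpar (N - m - 1) (by omega)
            have e3 : (N - m - 1) + 1 = N - m := by omega
            rw [e3] at this
            exact this
  exact ⟨fun t ht hpar m hm => (main t ht).2.1 hpar m hm,
    fun t ht hpar m hm => (main t (by omega)).2.2 hpar m hm⟩
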